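/- Let p be a prime and e ≥ 1, and let K be a maximal isotropic subgroup of M = (ℤ/p^eℤ)² with respect to the standard symplectic pairing ω. Then there exists an integer m with 0 ≤ m and 2m ≤ e such that for every 0 ≤ j ≤ e−1, the cardinality of the p-torsion subgroup of p^j·K equals p² if j < m, equals p if m ≤ j < e−m, and equals 1 if j ≥ e−m. -/

import Mathlib

section TorsionProfileAux

variable {p e : ℕ}

lemma ppow_eq_zero_iff' (hp : p.Prime) {k : ℕ} : (p : ZMod (p^e))^k = 0 ↔ e ≤ k := by
  have h : ((p^k : ℕ) : ZMod (p^e)) = 0 ↔ p^e ∣ p^k := ZMod.natCast_eq_zero_iff _ _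
  rw [Nat.cast_pow] at h
  rw [h, Nat.pow_dvd_pow_iff_le_right hp.one_lt]

lemma exists_unit_ppow (hp : p.Prime) (x : ZMod (p^e)) :
    ∃ (u : (ZMod (p^e))ˣ) (k : ℕ), k ≤ e ∧ x = u * (p : ZMod (p^e))^k := by
  haveI : NeZero (p^e) := ⟨pow_ne_zero e hp.pos.ne'⟩
  rcases eq_or_ne x 0 with rfl | hx
  · exact ⟨1, e, le_rfl, by rw [(ppow_eq_zero_iff' hp).2 le_rfl, mul_zero]⟩
  · have hval : x.val ≠ 0 := by
      intro h
      apply hx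
      have := ZMod.natCast_rightInverse (n := p^e) x
      rw [← this, h, Nat.cast_zero]
    set k := (x.val).factorization p with hk
    have hdvd : p^k ∣ x.val := Nat.ordProj_dvd _ _
    obtain ⟨c, hc⟩ := hdvd
    have hndvd : ¬ p ∣ c := by
      intro ⟨d, hd⟩
      have : p ^ (k+1) ∣ x.val := ⟨d, by rw [hc, hd]; ring⟩
      exact Nat.pow_succ_factorization_not_dvd hval hp this
    have hcop : Nat.Coprime c (p^e) :=
      Nat.Coprime.pow_right e (Nat.coprime_comm.mp (hp.coprime_iff_not_dvd.mpr hndvd))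
    refine ⟨ZMod.unitOfCoprime c hcop, k, ?_, ?_⟩
    · by_contra hke
      push_neg at hke
      have : p^e ∣ x.val := dvd_trans (pow_dvd_pow p hke.le) ⟨c, hc⟩
      have hlt : x.val < p^e := ZMod.val_lt x
      have := Nat.le_of_dvd (Nat.pos_of_ne_zero hval) this
      omega
    · have : ((x.val : ℕ) : ZMod (p^e)) = x := ZMod.natCast_rightInverse x
      rw [← this, hc]
      push_cast
      rw [ZMod.coe_unitOfCoprime]
      ring

lemma addSubgroup_classify (hp : p.Prime) (A : AddSubgroup (ZMod (p^e))) :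
    ∃ k ≤ e, (A : Set (ZMod (p^e))) = {x | ∃ c, x = c * (p : ZMod (p^e))^k} := by
  haveI : NeZero (p^e) := ⟨pow_ne_zero e hp.pos.ne'⟩
  obtain ⟨g, hg⟩ := IsAddCyclic.exists_generator (α := A)
  obtain ⟨u, k, hk, hgu⟩ := exists_unit_ppow hp (g : ZMod (p^e))
  refine ⟨k, hk, ?_⟩
  ext x
  constructor
  · intro hx
    obtain ⟨n, hn⟩ := AddSubgroup.mem_zmultiples_iff.mp (hg ⟨x, hx⟩)
    have : n • (g : ZMod (p^e)) = x := by
      have := congrArg (Subtype.val) hn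
      simpa using this
    refine ⟨(n : ZMod (p^e)) * u, ?_⟩
    rw [← this, hgu, zsmul_eq_mul]
    ring
  · rintro ⟨c, rfl⟩
    have hgA : (g : ZMod (p^e)) ∈ A := g.2
    have : c * (p : ZMod (p^e))^k = (c * (u⁻¹ : (ZMod (p^e))ˣ)) * (g : ZMod (p^e)) := by
      rw [hgu]
      rw [mul_assoc c, ← mul_assoc _ (u : ZMod (p^e)), Units.inv_mul, one_mul]
    rw [this]
    have := AddSubgroup.zsmul_mem A hgA ((c * (u⁻¹ : (ZMod (p^e))ˣ)).val : ℤ)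
    rwa [zsmul_eq_mul, Int.cast_natCast,
      ZMod.natCast_rightInverse (c * ((u⁻¹ : (ZMod (p^e))ˣ) : ZMod (p^e)))] at this

/-- scalar multiplication by a natural number as an `AddMonoidHom`. -/
def smulHom (M : Type*) [AddCommGroup M] (n : ℕ) : M →+ M :=
  AddMonoidHom.mk' (fun x => n • x) (fun a b => smul_add n a b)

@[simp] lemma smulHom_apply {M : Type*} [AddCommGroup M] (n : ℕ) (x : M) :
    smulHom M n x = n • x := rfl

/-- generic counting: `|H| = |f(H)| * |H ∩ ker f|`. -/
lemma card_map_mul_card {G G' : Type*} [AddCommGroup G] [AddCommGroup G'] [Finite G]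
    (f : G →+ G') (H : AddSubgroup G) :
    Nat.card (H.map f) * Nat.card {x : G // x ∈ H ∧ f x = 0} = Nat.card H := by
  set g : H →+ G' := f.comp H.subtype with hg
  have h1 : Nat.card H = Nat.card (H ⧸ g.ker) * Nat.card g.ker :=
    AddSubgroup.card_eq_card_quotient_mul_card_addSubgroup g.ker
  have h2 : Nat.card (H ⧸ g.ker) = Nat.card g.range :=
    Nat.card_congr (QuotientAddGroup.quotientKerEquivRange g).toEquiv
  have h3 : g.range = H.map f := by
    rw [hg, AddMonoidHom.range_comp, AddSubgroup.range_subtype]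
  have h4 : Nat.card g.ker = Nat.card {x : G // x ∈ H ∧ f x = 0} := by
    refine Nat.card_congr ⟨fun x => ⟨x.1.1, x.1.2, x.2⟩, fun x => ⟨⟨x.1, x.2.1⟩, x.2.2⟩,
      fun x => rfl, fun x => rfl⟩
  rw [h1, h2, h3, h4]

/-- the subgroup of multiples of `p^k`. -/
def Dsub (p e k : ℕ) : AddSubgroup (ZMod (p^e)) where
  carrier := {x | ∃ c, x = c * (p : ZMod (p^e))^k}
  zero_mem' := ⟨0, by ring⟩
  add_mem' := by rintro a b ⟨c, rfl⟩ ⟨d, rfl⟩; exact ⟨c + d, by ring⟩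
  neg_mem' := by rintro a ⟨c, rfl⟩; exact ⟨-c, by ring⟩

lemma mem_Dsub {k : ℕ} {x : ZMod (p^e)} : x ∈ Dsub p e k ↔ ∃ c, x = c * (p : ZMod (p^e))^k :=
  Iff.rfl

lemma card_Dsub (hp : p.Prime) (k : ℕ) : Nat.card (Dsub p e k) = p ^ (e - k) := by
  haveI : NeZero (p^e) := ⟨pow_ne_zero e hp.pos.ne'⟩
  have h1 : Dsub p e k = AddSubgroup.zmultiples ((p : ZMod (p^e))^k) := by
    ext x
    rw [mem_Dsub, AddSubgroup.mem_zmultiples_iff]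
    constructor
    · rintro ⟨c, rfl⟩
      exact ⟨(c.val : ℤ), by rw [zsmul_eq_mul, Int.cast_natCast,
        ZMod.natCast_rightInverse c]⟩
    · rintro ⟨n, rfl⟩
      exact ⟨(n : ZMod (p^e)), by rw [zsmul_eq_mul]⟩
  rw [h1, Nat.card_zmultiples]
  have h2 : ((p : ZMod (p^e)))^k = ((p^k : ℕ) : ZMod (p^e)) := by push_cast; ring
  rw [h2, ZMod.addOrderOf_coe _ (pow_ne_zero e hp.pos.ne')]
  rcases le_or_gt k e with hke | hek
  · rw [Nat.gcd_comm, Nat.gcd_eq_left (pow_dvd_pow p hke), Nat.pow_div hke hp.pos]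
  · rw [Nat.gcd_eq_left (pow_dvd_pow p hek.le), Nat.div_self (pow_pos hp.pos e),
      Nat.sub_eq_zero_of_le hek.le, pow_zero]

/-- annihilator of `p^a` in `ZMod (p^e)` is the set of multiples of `p^(e-a)`. -/
lemma ann_ppow (hp : p.Prime) {a : ℕ} {s : ZMod (p^e)} :
    s * (p : ZMod (p^e))^a = 0 ↔ ∃ c, s = c * (p : ZMod (p^e))^(e - a) := by
  haveI : NeZero (p^e) := ⟨pow_ne_zero e hp.pos.ne'⟩
  constructor
  · intro h
    rcases le_or_gt e a with hea | hae
    · exact ⟨s, by rw [Nat.sub_eq_zero_of_le hea, pow_zero, mul_one]⟩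
    · have hs : ((s.val * p^a : ℕ) : ZMod (p^e)) = 0 := by
        push_cast
        rw [ZMod.natCast_rightInverse s, h]
      rw [ZMod.natCast_eq_zero_iff] at hs
      have hdvd : p^(e-a) ∣ s.val := by
        have h2 : p^(e-a) * p^a ∣ s.val * p^a := by
          rwa [← pow_add, Nat.sub_add_cancel hae.le]
        exact (Nat.mul_dvd_mul_iff_right (pow_pos hp.pos a)).mp h2
      obtain ⟨d, hd⟩ := hdvd
      refine ⟨(d : ZMod (p^e)), ?_⟩
      have : ((s.val : ℕ) : ZMod (p^e)) = s := ZMod.natCast_rightInverse s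
      rw [← this, hd]
      push_cast
      ring
  · rintro ⟨c, rfl⟩
    rw [mul_assoc, ← pow_add]
    have : (p : ZMod (p^e))^(e - a + a) = 0 := (ppow_eq_zero_iff' hp).mpr (by omega)
    rw [this, mul_zero]

/-- the two-generator subgroup `⟨(p^a, u p^c), (0, p^b)⟩`. -/
def Wsub (p e a c b : ℕ) (u : (ZMod (p^e))ˣ) : AddSubgroup (ZMod (p^e) × ZMod (p^e)) where
  carrier := {x | ∃ s t : ZMod (p^e), x = (s * (p:ZMod (p^e))^a,
    s * (u * (p:ZMod (p^e))^c) + t * (p:ZMod (p^e))^b)}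
  zero_mem' := ⟨0, 0, by simp [Prod.ext_iff]⟩
  add_mem' := by
    rintro x y ⟨s, t, rfl⟩ ⟨s', t', rfl⟩
    exact ⟨s + s', t + t', by rw [Prod.mk_add_mk, Prod.mk.injEq]; constructor <;> ring⟩
  neg_mem' := by
    rintro x ⟨s, t, rfl⟩
    exact ⟨-s, -t, by rw [Prod.neg_mk, Prod.mk.injEq]; constructor <;> ring⟩

lemma mem_Wsub {a c b : ℕ} {u : (ZMod (p^e))ˣ} {x : ZMod (p^e) × ZMod (p^e)} :
    x ∈ Wsub p e a c b u ↔ ∃ s t : ZMod (p^e), x = (s * (p:ZMod (p^e))^a,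
      s * (u * (p:ZMod (p^e))^c) + t * (p:ZMod (p^e))^b) := Iff.rfl

/-- the fiber over `0` of the first projection of `Wsub`. -/
lemma fiber_Wsub (hp : p.Prime) {a c b : ℕ} {u : (ZMod (p^e))ˣ} {z : ZMod (p^e)} :
    ((0, z) ∈ Wsub p e a c b u) ↔ z ∈ Dsub p e (min ((e-a)+c) b) := by
  set P : ZMod (p^e) := (p : ZMod (p^e))
  constructor
  · rintro ⟨s, t, h⟩
    rw [Prod.mk.injEq] at h
    obtain ⟨h1, h2⟩ := h
    obtain ⟨d, rfl⟩ := (ann_ppow hp).mp h1.symm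
    rw [mem_Dsub]
    refine ⟨d * u * P^((e-a)+c - min ((e-a)+c) b) + t * P^(b - min ((e-a)+c) b), ?_⟩
    rw [h2]
    rw [add_mul, mul_assoc _ (P ^ (b - min ((e-a)+c) b)) _, ← pow_add,
      Nat.sub_add_cancel (min_le_right _ _), mul_assoc _ (P ^ ((e-a)+c - min ((e-a)+c) b)) _,
      ← pow_add, Nat.sub_add_cancel (min_le_left _ _)]
    ring
  · rw [mem_Dsub]
    rintro ⟨d, rfl⟩
    rcases le_total ((e-a)+c) b with hmin | hmin
    · rw [min_eq_left hmin]
      refine ⟨d * (u⁻¹ : (ZMod (p^e))ˣ) * P^(e-a), 0, ?_⟩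
      rw [Prod.mk.injEq]
      constructor
      · rw [mul_assoc, ← pow_add]
        have : P^(e-a+a) = 0 := (ppow_eq_zero_iff' hp).mpr (by omega)
        rw [this, mul_zero]
      · have hu : (↑(u⁻¹ : (ZMod (p^e))ˣ) : ZMod (p^e)) * u = 1 := by
          rw [← Units.val_mul, inv_mul_cancel, Units.val_one]
        calc d * P^(e-a+c) = (d * ((↑(u⁻¹ : (ZMod (p^e))ˣ) : ZMod (p^e)) * u)) * (P^(e-a) * P^c)
              := by rw [hu, ← pow_add]; ring
          _ = d * (↑(u⁻¹ : (ZMod (p^e))ˣ) : ZMod (p^e)) * P^(e-a) * (↑u * P^c) + 0 * P^b := by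
              ring
    · rw [min_eq_right hmin]
      exact ⟨0, d, by rw [Prod.mk.injEq]; constructor <;> ring⟩

lemma card_Wsub (hp : p.Prime) (a c b : ℕ) (u : (ZMod (p^e))ˣ) :
    Nat.card (Wsub p e a c b u) = p^(e-a) * p^(e - min ((e-a)+c) b) := by
  haveI : NeZero (p^e) := ⟨pow_ne_zero e hp.pos.ne'⟩
  have key := card_map_mul_card (AddMonoidHom.fst (ZMod (p^e)) (ZMod (p^e))) (Wsub p e a c b u)
  have h1 : (Wsub p e a c b u).map (AddMonoidHom.fst _ _) = Dsub p e a := by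
    ext x
    rw [AddSubgroup.mem_map, mem_Dsub]
    constructor
    · rintro ⟨y, ⟨s, t, rfl⟩, rfl⟩
      exact ⟨s, rfl⟩
    · rintro ⟨s, rfl⟩
      exact ⟨(s * (p:ZMod (p^e))^a, s * (u * (p:ZMod (p^e))^c) + 0 * (p:ZMod (p^e))^b),
        ⟨s, 0, rfl⟩, rfl⟩
  have h2 : Nat.card {x : ZMod (p^e) × ZMod (p^e) // x ∈ Wsub p e a c b u ∧
      (AddMonoidHom.fst _ _) x = 0} = Nat.card (Dsub p e (min ((e-a)+c) b)) := by
    refine Nat.card_congr ⟨fun x => ⟨x.1.2, ?_⟩, fun z => ⟨(0, z.1), ?_, rfl⟩, ?_, ?_⟩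
    · have hx := x.2.1
      have hx1 : x.1.1 = 0 := x.2.2
      rw [← fiber_Wsub hp (u := u)]
      have h : x.1 = ((0 : ZMod (p^e)), x.1.2) := Prod.ext_iff.mpr ⟨hx1, rfl⟩
      exact h ▸ hx
    · exact (fiber_Wsub hp).mpr z.2
    · intro x
      apply Subtype.ext
      have hx1 : x.1.1 = 0 := x.2.2
      exact Prod.ext_iff.mpr ⟨hx1.symm, rfl⟩
    · intro z
      rfl
  rw [h1, h2, card_Dsub hp, card_Dsub hp] at key
  exact key.symm

lemma smul_ppow (j : ℕ) (y : ZMod (p^e) × ZMod (p^e)) :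
    (p^j) • y = ((p:ZMod (p^e))^j * y.1, (p:ZMod (p^e))^j * y.2) := by
  have h : ∀ z : ZMod (p^e), (p^j) • z = (p:ZMod (p^e))^j * z := by
    intro z
    rw [nsmul_eq_mul]
    push_cast
    ring
  rw [Prod.smul_def, Prod.ext_iff]
  exact ⟨h y.1, h y.2⟩

lemma map_Wsub (a c b j : ℕ) (u : (ZMod (p^e))ˣ) :
    (Wsub p e a c b u).map (smulHom _ (p^j)) = Wsub p e (a+j) (c+j) (b+j) u := by
  ext x
  rw [AddSubgroup.mem_map, mem_Wsub]
  constructor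
  · rintro ⟨y, ⟨s, t, rfl⟩, rfl⟩
    refine ⟨s, t, ?_⟩
    rw [smulHom_apply, smul_ppow, Prod.ext_iff]
    constructor
    · show (p:ZMod (p^e))^j * (s * (p:ZMod (p^e))^a) = s * (p:ZMod (p^e))^(a+j)
      rw [pow_add]; ring
    · show (p:ZMod (p^e))^j * (s * (↑u * (p:ZMod (p^e))^c) + t * (p:ZMod (p^e))^b)
        = s * (↑u * (p:ZMod (p^e))^(c+j)) + t * (p:ZMod (p^e))^(b+j)
      rw [pow_add, pow_add]; ring
  · rintro ⟨s, t, rfl⟩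
    refine ⟨(s * (p:ZMod (p^e))^a, s * (↑u * (p:ZMod (p^e))^c) + t * (p:ZMod (p^e))^b),
      ⟨s, t, rfl⟩, ?_⟩
    rw [smulHom_apply, smul_ppow, Prod.ext_iff]
    constructor
    · show (p:ZMod (p^e))^j * (s * (p:ZMod (p^e))^a) = s * (p:ZMod (p^e))^(a+j)
      rw [pow_add]; ring
    · show (p:ZMod (p^e))^j * (s * (↑u * (p:ZMod (p^e))^c) + t * (p:ZMod (p^e))^b)
        = s * (↑u * (p:ZMod (p^e))^(c+j)) + t * (p:ZMod (p^e))^(b+j)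
      rw [pow_add, pow_add]; ring

lemma map_smulHom_comp {M : Type*} [AddCommGroup M] (H : AddSubgroup M) (a b : ℕ) :
    (H.map (smulHom M a)).map (smulHom M b) = H.map (smulHom M (b * a)) := by
  rw [AddSubgroup.map_map]
  congr 1
  ext x
  show b • (a • x) = (b * a) • x
  rw [mul_smul]

lemma addSubgroup_param (hp : p.Prime) (K : AddSubgroup (ZMod (p^e) × ZMod (p^e))) :
    ∃ α β : ℕ, α ≤ e ∧ β ≤ e ∧ ∃ γ : ZMod (p^e),
      (∀ x : ZMod (p^e) × ZMod (p^e), x ∈ K ↔ ∃ s t : ZMod (p^e),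
        x = (s * (p:ZMod (p^e))^α, s * γ + t * (p:ZMod (p^e))^β)) ∧
      (∀ z : ZMod (p^e), ((0 : ZMod (p^e)), z) ∈ K ↔ ∃ c, z = c * (p:ZMod (p^e))^β) := by
  haveI : NeZero (p^e) := ⟨pow_ne_zero e hp.pos.ne'⟩
  have hscal : ∀ (s : ZMod (p^e)) (y : ZMod (p^e) × ZMod (p^e)), y ∈ K →
      (s * y.1, s * y.2) ∈ K := by
    intro s y hy
    have h : (s * y.1, s * y.2) = s.val • y := by
      rw [Prod.smul_def, Prod.ext_iff]
      constructor <;>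
      · show _ = s.val • _
        rw [nsmul_eq_mul, ZMod.natCast_rightInverse s]
    rw [h]
    exact nsmul_mem hy s.val
  obtain ⟨α, hα, hA⟩ := addSubgroup_classify hp (K.map (AddMonoidHom.fst _ _))
  obtain ⟨β, hβ, hB⟩ := addSubgroup_classify hp (K.comap (AddMonoidHom.inr _ _))
  have hBmem : ∀ z : ZMod (p^e), ((0 : ZMod (p^e)), z) ∈ K ↔ ∃ c, z = c * (p:ZMod (p^e))^β := by
    intro z
    have h1 : ((0 : ZMod (p^e)), z) ∈ K ↔ z ∈ K.comap (AddMonoidHom.inr _ _) := Iff.rfl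
    rw [h1, ← SetLike.mem_coe, hB]
    rfl
  have hPα : (p:ZMod (p^e))^α ∈ (K.map (AddMonoidHom.fst _ _) : Set (ZMod (p^e))) := by
    rw [hA]; exact ⟨1, (one_mul _).symm⟩
  rw [SetLike.mem_coe, AddSubgroup.mem_map] at hPα
  obtain ⟨y, hyK, hy1⟩ := hPα
  refine ⟨α, β, hα, hβ, y.2, ?_, hBmem⟩
  have hy1' : y.1 = (p:ZMod (p^e))^α := hy1
  have hyeq : y = ((p:ZMod (p^e))^α, y.2) := Prod.ext_iff.mpr ⟨hy1', rfl⟩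
  intro x
  constructor
  · intro hx
    have hx1 : x.1 ∈ (K.map (AddMonoidHom.fst _ _) : Set (ZMod (p^e))) := ⟨x, hx, rfl⟩
    rw [hA] at hx1
    obtain ⟨s, hs⟩ := hx1
    have hsub : (x.1 - s * (p:ZMod (p^e))^α, x.2 - s * y.2) ∈ K := by
      have := K.sub_mem hx (hscal s y hyK)
      rwa [hyeq] at this
    rw [show x.1 - s * (p:ZMod (p^e))^α = 0 by rw [hs]; ring] at hsub
    obtain ⟨t, ht⟩ := (hBmem _).mp hsub
    refine ⟨s, t, Prod.ext_iff.mpr ⟨hs, ?_⟩⟩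
    have h2 : x.2 = s * y.2 + t * (p:ZMod (p^e))^β := by
      have := sub_eq_iff_eq_add.mp ht
      rw [this]; ring
    exact h2
  · rintro ⟨s, t, rfl⟩
    have h1 : (s * (p:ZMod (p^e))^α, s * y.2) ∈ K := by
      have := hscal s y hyK
      rwa [hyeq] at this
    have h2 : ((0 : ZMod (p^e)), t * (p:ZMod (p^e))^β) ∈ K := (hBmem _).mpr ⟨t, rfl⟩
    have := K.add_mem h1 h2
    rwa [Prod.mk_add_mk, add_zero] at this

lemma cancel_pow (hp : 0 < p) {A B d X : ℕ} (h : p^A * X = p^B) (hd : B = A + d) : X = p^d := by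
  subst hd
  rw [pow_add] at h
  exact Nat.eq_of_mul_eq_mul_left (pow_pos hp A) h

end TorsionProfileAux

/-- If `K` is a maximal isotropic subgroup of `M = (ℤ/p^eℤ)²` for the standard symplectic
pairing, then there is an integer `m` with `2m ≤ e` such that the `p`-torsion subgroup of
`p^j·K` has cardinality `p²` for `j < m`, `p` for `m ≤ j < e - m`, and `1` for `j ≥ e - m`. -/
theorem torsion_profile_of_maximal_isotropic (p : ℕ) (hp : p.Prime) (e : ℕ) (he : 1 ≤ e)
    (K : AddSubgroup (ZMod (p ^ e) × ZMod (p ^ e)))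
    (hiso : ∀ x ∈ K, ∀ y ∈ K, x.1 * y.2 - x.2 * y.1 = 0)
    (hmax : ∀ K' : AddSubgroup (ZMod (p ^ e) × ZMod (p ^ e)),
      (∀ x ∈ K', ∀ y ∈ K', x.1 * y.2 - x.2 * y.1 = 0) → K ≤ K' → K' = K) :
    ∃ m : ℕ, 2 * m ≤ e ∧ ∀ j < e,
      (j < m →
        Nat.card {x : ZMod (p ^ e) × ZMod (p ^ e) |
          (∃ y ∈ K, p ^ j • y = x) ∧ p • x = 0} = p ^ 2) ∧
      (m ≤ j → j < e - m →
        Nat.card {x : ZMod (p ^ e) × ZMod (p ^ e) |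
          (∃ y ∈ K, p ^ j • y = x) ∧ p • x = 0} = p) ∧
      (e - m ≤ j →
        Nat.card {x : ZMod (p ^ e) × ZMod (p ^ e) |
          (∃ y ∈ K, p ^ j • y = x) ∧ p • x = 0} = 1) := by
  haveI : NeZero (p^e) := ⟨pow_ne_zero e hp.pos.ne'⟩
  obtain ⟨α, β, hα, hβ, γ, hK, hB⟩ := addSubgroup_param hp K
  obtain ⟨u, v, hv, hγ⟩ := exists_unit_ppow hp γ
  have hg1 : ((p:ZMod (p^e))^α, γ) ∈ K := (hK _).mpr
    ⟨1, 0, by rw [Prod.mk.injEq]; constructor <;> ring⟩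
  have hg2 : ((0:ZMod (p^e)), (p:ZMod (p^e))^β) ∈ K := (hB _).mpr ⟨1, (one_mul _).symm⟩
  have hsum : e ≤ α + β := by
    have h := hiso _ hg1 _ hg2
    simp only at h
    have h0 : (p:ZMod (p^e))^(α+β) = 0 := by
      rw [pow_add]
      linear_combination h
    exact (ppow_eq_zero_iff' hp).mp h0
  have hsum2 : α + β ≤ e := by
    by_contra hgt
    push_neg at hgt
    have hβ1 : 1 ≤ β := by omega
    set K' := Wsub p e α v (β-1) u with hK'
    have hiso' : ∀ x ∈ K', ∀ y ∈ K', x.1 * y.2 - x.2 * y.1 = 0 := by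
      rintro x ⟨s, t, rfl⟩ y ⟨s', t', rfl⟩
      have h0 : (p:ZMod (p^e))^α * (p:ZMod (p^e))^(β-1) = 0 := by
        rw [← pow_add]
        exact (ppow_eq_zero_iff' hp).mpr (by omega)
      show (s * (p:ZMod (p^e))^α) * (s' * (↑u * (p:ZMod (p^e))^v) + t' * (p:ZMod (p^e))^(β-1))
        - (s * (↑u * (p:ZMod (p^e))^v) + t * (p:ZMod (p^e))^(β-1)) * (s' * (p:ZMod (p^e))^α) = 0
      linear_combination (s*t' - t*s') * h0
    have hle : K ≤ K' := by
      intro x hx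
      obtain ⟨s, t, rfl⟩ := (hK x).mp hx
      refine ⟨s, t * p, ?_⟩
      rw [Prod.mk.injEq]
      refine ⟨rfl, ?_⟩
      rw [hγ]
      have hpow : (p:ZMod (p^e))^β = (p:ZMod (p^e))^(β-1) * p := by
        rw [← pow_succ]
        congr 1
        omega
      rw [hpow]
      ring
    have hKK : K' = K := hmax K' hiso' hle
    have hmem : ((0:ZMod (p^e)), (p:ZMod (p^e))^(β-1)) ∈ K' :=
      ⟨0, 1, by rw [Prod.mk.injEq]; constructor <;> ring⟩
    rw [hKK] at hmem
    obtain ⟨c, hc⟩ := (hB _).mp hmem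
    have hz : (p:ZMod (p^e))^(e-1) = 0 := by
      have h2 : (p:ZMod (p^e))^(β-1) * (p:ZMod (p^e))^(e-β)
          = c * ((p:ZMod (p^e))^β * (p:ZMod (p^e))^(e-β)) := by rw [hc]; ring
      rw [← pow_add, ← pow_add, show β-1+(e-β) = e-1 by omega, show β + (e-β) = e by omega,
        show (p:ZMod (p^e))^e = 0 from (ppow_eq_zero_iff' hp).mpr le_rfl, mul_zero] at h2
      exact h2
    have := (ppow_eq_zero_iff' hp).mp hz
    omega
  have hαβ : α + β = e := le_antisymm hsum2 hsum
  set m := min α (min β v) with hm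
  have hKW : K = Wsub p e α v β u := by
    ext x
    rw [hK x, mem_Wsub, hγ]
  have cardH : ∀ j : ℕ, Nat.card (K.map (smulHom _ (p^j))) = p ^ ((e-m-j) + (m-j)) := by
    intro j
    rw [hKW, map_Wsub, card_Wsub hp, ← pow_add]
    congr 1
    omega
  refine ⟨m, by omega, ?_⟩
  intro j hj
  have key := card_map_mul_card (smulHom (ZMod (p^e) × ZMod (p^e)) p) (K.map (smulHom _ (p^j)))
  rw [map_smulHom_comp, show p * p^j = p^(j+1) by ring, cardH j, cardH (j+1)] at key
  have hcard : Nat.card {x : ZMod (p ^ e) × ZMod (p ^ e) |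
      (∃ y ∈ K, p ^ j • y = x) ∧ p • x = 0} =
      Nat.card {x : ZMod (p^e) × ZMod (p^e) // x ∈ K.map (smulHom _ (p^j)) ∧
        smulHom (ZMod (p^e) × ZMod (p^e)) p x = 0} := by
    apply Nat.card_congr
    apply Equiv.subtypeEquivRight
    intro x
    simp only [Set.mem_setOf_eq, AddSubgroup.mem_map, smulHom_apply]
  refine ⟨?_, ?_, ?_⟩
  · intro h1
    rw [hcard]
    exact cancel_pow hp.pos key (by omega)
  · intro h1 h2
    rw [hcard]
    have := cancel_pow hp.pos key (show (e-m-j)+(m-j) = ((e-m-(j+1))+(m-(j+1))) + 1 by omega)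
    rwa [pow_one] at this
  · intro h1
    rw [hcard]
    have := cancel_pow hp.pos key (show (e-m-j)+(m-j) = ((e-m-(j+1))+(m-(j+1))) + 0 by omega)
    rwa [pow_zero] at this
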